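/- arXiv:2409.03551 — 3 statements merged into one kernel-verified Lean document; each statement's English description precedes it below -/
import Mathlib

section
/- Let h_1, ..., h_K be independent random vectors in ℂ^N, each symmetric (h_i =d -h_i), with all relevant moments finite. Let P = diag(p_1,...,p_K) with p_i ≥ 0, Z a fixed positive semidefinite N×N matrix, σ² > 0, and H = [h_1,...,h_K]. Define Π = E[ P^{1/2} Hᴴ (H P Hᴴ + Z + σ² I_N)^{-1} H P^{1/2} ]. Then Π is a diagonal matrix, i.e., [Π]_{i,j} = 0 for i ≠ j. -/
open MeasureTheory ProbabilityTheory Matrix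
open scoped ComplexOrder

/-- The channel matrix built from a tuple of column vectors. -/
noncomputable def chanMat {N K : ℕ} (x : Fin K → Fin N → ℂ) : Matrix (Fin N) (Fin K) ℂ :=
  Matrix.of fun n k => x k n

/-- `P^{1/2} Hᴴ (H P Hᴴ + Z + σ² I)⁻¹ H P^{1/2}` as a function of the channel tuple. -/
noncomputable def MfunAux {N K : ℕ} (p : Fin K → ℝ) (Z : Matrix (Fin N) (Fin N) ℂ)
    (σ2 : ℝ) (x : Fin K → Fin N → ℂ) : Matrix (Fin K) (Fin K) ℂ :=
  (Matrix.diagonal fun k => (Real.sqrt (p k) : ℂ)) * (chanMat x)ᴴ *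
    ((chanMat x) * (Matrix.diagonal fun k => (p k : ℂ)) * (chanMat x)ᴴ + Z + (σ2 : ℂ) • 1)⁻¹ *
    (chanMat x) * (Matrix.diagonal fun k => (Real.sqrt (p k) : ℂ))

/-- Sign-flip diagonal matrix. -/
noncomputable def sgnMat (K : ℕ) (i : Fin K) : Matrix (Fin K) (Fin K) ℂ :=
  Matrix.diagonal fun k => if k = i then (-1 : ℂ) else 1

lemma MfunAux_flip {N K : ℕ} (p : Fin K → ℝ) (Z : Matrix (Fin N) (Fin N) ℂ) (σ2 : ℝ)
    (i : Fin K) (x : Fin K → Fin N → ℂ) :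
    MfunAux p Z σ2 (fun k => if k = i then -x k else x k) =
      sgnMat K i * MfunAux p Z σ2 x * sgnMat K i := by
  have hflip : chanMat (fun k => if k = i then -x k else x k) = chanMat x * sgnMat K i := by
    ext n k
    by_cases hk : k = i <;>
      simp [chanMat, sgnMat, Matrix.mul_diagonal, hk]
  have hDH : (sgnMat K i)ᴴ = sgnMat K i := by
    rw [sgnMat, Matrix.diagonal_conjTranspose, Matrix.diagonal_eq_diagonal_iff]
    intro k
    by_cases hk : k = i <;> simp [hk]
  have hDPD : sgnMat K i * (Matrix.diagonal fun k => (p k : ℂ)) * sgnMat K i =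
      (Matrix.diagonal fun k => (p k : ℂ)) := by
    rw [sgnMat, Matrix.diagonal_mul_diagonal, Matrix.diagonal_mul_diagonal,
      Matrix.diagonal_eq_diagonal_iff]
    intro k
    by_cases hk : k = i <;> simp [hk]
  have hcomm : (Matrix.diagonal fun k => (Real.sqrt (p k) : ℂ)) * sgnMat K i =
      sgnMat K i * (Matrix.diagonal fun k => (Real.sqrt (p k) : ℂ)) := by
    rw [sgnMat, Matrix.diagonal_mul_diagonal, Matrix.diagonal_mul_diagonal,
      Matrix.diagonal_eq_diagonal_iff]
    intro k
    ring
  have hAeq : (chanMat x * sgnMat K i) * (Matrix.diagonal fun k => (p k : ℂ)) *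
      (chanMat x * sgnMat K i)ᴴ =
      chanMat x * (Matrix.diagonal fun k => (p k : ℂ)) * (chanMat x)ᴴ := by
    rw [Matrix.conjTranspose_mul, hDH]
    calc chanMat x * sgnMat K i * (Matrix.diagonal fun k => (p k : ℂ)) *
          (sgnMat K i * (chanMat x)ᴴ)
        = chanMat x * (sgnMat K i * (Matrix.diagonal fun k => (p k : ℂ)) * sgnMat K i) *
          (chanMat x)ᴴ := by simp only [Matrix.mul_assoc]
      _ = chanMat x * (Matrix.diagonal fun k => (p k : ℂ)) * (chanMat x)ᴴ := by
          rw [hDPD, Matrix.mul_assoc]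
  rw [MfunAux, MfunAux, hflip, hAeq, Matrix.conjTranspose_mul, hDH]
  simp only [← Matrix.mul_assoc]
  rw [hcomm]
  rw [Matrix.mul_assoc (sgnMat K i * (Matrix.diagonal fun k => (Real.sqrt (p k) : ℂ)) *
      (chanMat x)ᴴ *
      (chanMat x * (Matrix.diagonal fun k => (p k : ℂ)) * (chanMat x)ᴴ + Z + (σ2 : ℂ) • 1)⁻¹ *
      chanMat x) (sgnMat K i) (Matrix.diagonal fun k => (Real.sqrt (p k) : ℂ)),
    hcomm.symm]
  simp only [← Matrix.mul_assoc]

lemma measurable_det_comp {α : Type*} [MeasurableSpace α] {n : ℕ}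
    {B : α → Matrix (Fin n) (Fin n) ℂ} (hB : ∀ i j, Measurable fun a => B a i j) :
    Measurable fun a => (B a).det := by
  simp only [Matrix.det_apply']
  exact Finset.measurable_sum _ fun σ _ =>
    (Finset.measurable_prod _ fun i _ => hB _ _).const_mul _

lemma measurable_inv_entry {α : Type*} [MeasurableSpace α] {n : ℕ}
    {B : α → Matrix (Fin n) (Fin n) ℂ} (hB : ∀ i j, Measurable fun a => B a i j) (i j : Fin n) :
    Measurable fun a => (B a)⁻¹ i j := by
  simp only [Matrix.inv_def, Matrix.smul_apply, smul_eq_mul, Ring.inverse_eq_inv',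
    Matrix.adjugate_apply]
  refine (measurable_inv.comp (measurable_det_comp hB)).mul (measurable_det_comp ?_)
  intro a b
  simp only [Matrix.updateRow_apply]
  by_cases hab : a = j <;> simp [hab, hB]

lemma measurable_MfunAux_entry {N K : ℕ} (p : Fin K → ℝ) (Z : Matrix (Fin N) (Fin N) ℂ)
    (σ2 : ℝ) (i j : Fin K) :
    Measurable fun x : Fin K → Fin N → ℂ => MfunAux p Z σ2 x i j := by
  have hc : ∀ (n : Fin N) (k : Fin K), Measurable fun x : Fin K → Fin N → ℂ => chanMat x n k :=
    fun n k => (measurable_pi_apply n).comp (measurable_pi_apply k)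
  have hA : ∀ n m, Measurable fun x : Fin K → Fin N → ℂ =>
      (chanMat x * (Matrix.diagonal fun k => (p k : ℂ)) * (chanMat x)ᴴ + Z
        + (σ2 : ℂ) • (1 : Matrix (Fin N) (Fin N) ℂ)) n m := by
    intro n m
    simp only [Matrix.add_apply, Matrix.mul_apply, Matrix.mul_diagonal,
      Matrix.conjTranspose_apply]
    refine (Measurable.add (Measurable.add ?_ measurable_const) measurable_const)
    exact Finset.measurable_sum _ fun k _ => Measurable.mul
      (Finset.measurable_sum _ fun l _ => (hc n l).mul_const _)
      (continuous_star.measurable.comp (hc m k))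
  have hInv : ∀ n m, Measurable fun x : Fin K → Fin N → ℂ =>
      (chanMat x * (Matrix.diagonal fun k => (p k : ℂ)) * (chanMat x)ᴴ + Z
        + (σ2 : ℂ) • (1 : Matrix (Fin N) (Fin N) ℂ))⁻¹ n m :=
    fun n m => measurable_inv_entry hA n m
  simp only [MfunAux, Matrix.mul_apply, Matrix.mul_diagonal, Matrix.diagonal_mul,
    Matrix.conjTranspose_apply]
  refine Finset.measurable_sum _ fun k1 _ => Measurable.mul_const
    (Finset.measurable_sum _ fun n2 _ => Measurable.mul
      (Finset.measurable_sum _ fun n3 _ => Measurable.mul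
        (Finset.measurable_sum _ fun k4 _ => Measurable.const_mul
          (continuous_star.measurable.comp (hc n3 k4)) _)
        (hInv n3 n2))
      (hc n2 k1)) _

/-- For independent symmetric channel estimates `h_1, …, h_K`, the matrix
`Π = E[P^{1/2} Hᴴ (H P Hᴴ + Z + σ² I)⁻¹ H P^{1/2}]` is diagonal. -/
theorem pi_matrix_diagonal_of_symmetric_channels
    {Ω : Type*} [MeasurableSpace Ω] {μ : Measure Ω} [IsProbabilityMeasure μ]
    {N K : ℕ} (h : Fin K → Ω → (Fin N → ℂ))
    (hmeas : ∀ i, Measurable (h i))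
    (hindep : iIndepFun h μ)
    (hsymm : ∀ i, Measure.map (h i) μ = Measure.map (fun ω => -h i ω) μ)
    (p : Fin K → ℝ) (hp : ∀ i, 0 ≤ p i)
    (Z : Matrix (Fin N) (Fin N) ℂ) (hZ : Z.PosSemidef)
    (σ2 : ℝ) (hσ2 : 0 < σ2)
    (H : Ω → Matrix (Fin N) (Fin K) ℂ)
    (hH : ∀ ω, H ω = Matrix.of fun n k => h k ω n)
    (P Phalf : Matrix (Fin K) (Fin K) ℂ)
    (hP : P = Matrix.diagonal fun i => (p i : ℂ))
    (hPhalf : Phalf = Matrix.diagonal fun i => (Real.sqrt (p i) : ℂ))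
    (M : Ω → Matrix (Fin K) (Fin K) ℂ)
    (hM : ∀ ω, M ω =
      Phalf * (H ω)ᴴ * (H ω * P * (H ω)ᴴ + Z + (σ2 : ℂ) • 1)⁻¹ * H ω * Phalf)
    (hint : ∀ i j, Integrable (fun ω => M ω i j) μ)
    (Pmat : Matrix (Fin K) (Fin K) ℂ)
    (hPmat : ∀ i j, Pmat i j = ∫ ω, M ω i j ∂μ) :
    ∀ i j, i ≠ j → Pmat i j = 0 := by
  intro i j hij
  classical
  have hMeq : ∀ ω, M ω = MfunAux p Z σ2 (fun k => h k ω) := by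
    intro ω
    rw [hM, hH, hP, hPhalf]
    rfl
  -- the rest of the channels
  set g : Ω → ({x // x ∈ ({i}ᶜ : Finset (Fin K))} → Fin N → ℂ) :=
    fun ω k => h k ω with hgdef
  have hgmeas : Measurable g := measurable_pi_lambda _ fun k => hmeas k
  have hIndep : IndepFun (h i) g μ := by
    have h1 := hindep.indepFun_finset {i} ({i}ᶜ) disjoint_compl_right hmeas
    exact h1.comp (measurable_pi_apply
      (⟨i, Finset.mem_singleton_self i⟩ : ({i} : Finset (Fin K)))) measurable_id
  -- reconstruction of the full tuple from the pair
  set recon : (Fin N → ℂ) × ({x // x ∈ ({i}ᶜ : Finset (Fin K))} → Fin N → ℂ) →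
      (Fin K → Fin N → ℂ) :=
    fun uv k => if hk : k = i then uv.1 else uv.2 ⟨k, by simpa using hk⟩ with hrecon
  have hreconmeas : Measurable recon := by
    refine measurable_pi_lambda _ fun k => ?_
    by_cases hk : k = i
    · simpa [hrecon, hk] using (measurable_fst :
        Measurable fun uv : (Fin N → ℂ) × ({x // x ∈ ({i}ᶜ : Finset (Fin K))} → Fin N → ℂ) =>
          uv.1)
    · simpa [hrecon, hk, Function.comp_def] using ((measurable_pi_apply _).comp (measurable_snd :
        Measurable fun uv : (Fin N → ℂ) × ({x // x ∈ ({i}ᶜ : Finset (Fin K))} → Fin N → ℂ) =>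
          uv.2))
  set F : (Fin N → ℂ) × ({x // x ∈ ({i}ᶜ : Finset (Fin K))} → Fin N → ℂ) → ℂ :=
    fun uv => MfunAux p Z σ2 (recon uv) i j with hF
  have hFmeas : Measurable F := (measurable_MfunAux_entry p Z σ2 i j).comp hreconmeas
  have hMF : ∀ ω, M ω i j = F (h i ω, g ω) := by
    intro ω
    have hxeq : recon (h i ω, g ω) = fun k => h k ω := by
      funext k
      by_cases hk : k = i <;> simp [hrecon, hk, hgdef]
    rw [hF]
    simp only
    rw [hxeq, hMeq ω]
  have hMFneg : ∀ ω, F (-h i ω, g ω) = -(M ω i j) := by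
    intro ω
    have hxeq : recon (-h i ω, g ω) = fun k => if k = i then -h k ω else h k ω := by
      funext k
      by_cases hk : k = i <;> simp [hrecon, hk, hgdef]
    rw [hF]
    simp only
    rw [hxeq, MfunAux_flip p Z σ2 i (fun k => h k ω), hMeq ω]
    have hji : ¬ j = i := fun hc => hij hc.symm
    simp [sgnMat, Matrix.mul_diagonal, Matrix.diagonal_mul, hji]
  -- the joint law is invariant under flipping the sign of `h i`
  have hmap1 : μ.map (fun ω => (h i ω, g ω)) = (μ.map (h i)).prod (μ.map g) :=
    (indepFun_iff_map_prod_eq_prod_map_map (hmeas i).aemeasurable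
      hgmeas.aemeasurable).mp hIndep
  have hIndepNeg : IndepFun (fun ω => -h i ω) g μ :=
    hIndep.comp measurable_neg measurable_id
  have hmap2 : μ.map (fun ω => (-h i ω, g ω)) = (μ.map (fun ω => -h i ω)).prod (μ.map g) :=
    (indepFun_iff_map_prod_eq_prod_map_map (measurable_neg.comp (hmeas i)).aemeasurable
      hgmeas.aemeasurable).mp hIndepNeg
  have hmapeq : μ.map (fun ω => (h i ω, g ω)) = μ.map (fun ω => (-h i ω, g ω)) := by
    rw [hmap1, hmap2, ← hsymm i]
  have key : (∫ ω, M ω i j ∂μ) = -(∫ ω, M ω i j ∂μ) := by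
    calc (∫ ω, M ω i j ∂μ) = ∫ ω, F (h i ω, g ω) ∂μ := by simp only [hMF]
      _ = ∫ y, F y ∂(μ.map (fun ω => (h i ω, g ω))) :=
          (integral_map ((hmeas i).prodMk hgmeas).aemeasurable
            hFmeas.aestronglyMeasurable).symm
      _ = ∫ y, F y ∂(μ.map (fun ω => (-h i ω, g ω))) := by rw [hmapeq]
      _ = ∫ ω, F (-h i ω, g ω) ∂μ :=
          integral_map ((measurable_neg.comp (hmeas i)).prodMk hgmeas).aemeasurable
            hFmeas.aestronglyMeasurable
      _ = ∫ ω, -(M ω i j) ∂μ := by simp only [hMFneg]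
      _ = -(∫ ω, M ω i j ∂μ) := integral_neg _
  rw [hPmat i j]
  linear_combination key / 2
end

section
/- Let Π_1, ..., Π_L ∈ ℂ^{K×K} be Hermitian matrices each satisfying 0 ≼ Π_l ≺ I_K, and let 𝓛_k ⊆ {1,...,L} be nonempty. Then the linear system in unknowns (c_l)_{l ∈ 𝓛_k}, c_l ∈ ℂ^K: c_l + Σ_{j ∈ 𝓛_k, j ≠ l} Π_j c_j = e_k for all l ∈ 𝓛_k, has at most one solution. -/
open Matrix Finset
open scoped ComplexOrder

/-- Uniqueness of the solution of the LTMMSE linear system when each `Π_l`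
is Hermitian with `0 ≼ Π_l ≺ I`. -/
theorem ltmmse_system_unique_solution
    {L K : ℕ} (Pmat : Fin L → Matrix (Fin K) (Fin K) ℂ)
    (hpsd : ∀ l, (Pmat l).PosSemidef)
    (hlt : ∀ l, (1 - Pmat l).PosDef)
    (k : Fin K) (Lk : Finset (Fin L)) (hLk : Lk.Nonempty)
    (c c' : Fin L → (Fin K → ℂ))
    (heq : ∀ l ∈ Lk,
      c l + ∑ j ∈ Lk.erase l, (Pmat j).mulVec (c j) = Pi.single k 1)
    (heq' : ∀ l ∈ Lk,
      c' l + ∑ j ∈ Lk.erase l, (Pmat j).mulVec (c' j) = Pi.single k 1) :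
    ∀ l ∈ Lk, c l = c' l := by
  set d : Fin L → (Fin K → ℂ) := fun l => c l - c' l with hd_def
  -- difference system
  have hd : ∀ l ∈ Lk, d l + ∑ j ∈ Lk.erase l, (Pmat j).mulVec (d j) = 0 := by
    intro l hl
    have h1 := heq l hl
    have h2 := heq' l hl
    have : (c l + ∑ j ∈ Lk.erase l, (Pmat j).mulVec (c j))
        - (c' l + ∑ j ∈ Lk.erase l, (Pmat j).mulVec (c' j)) = 0 := by
      rw [h1, h2, sub_self]
    calc d l + ∑ j ∈ Lk.erase l, (Pmat j).mulVec (d j)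
        = (c l + ∑ j ∈ Lk.erase l, (Pmat j).mulVec (c j))
          - (c' l + ∑ j ∈ Lk.erase l, (Pmat j).mulVec (c' j)) := by
          simp only [hd_def, Matrix.mulVec_sub, Finset.sum_sub_distrib]
          abel
      _ = 0 := this
  set w : Fin K → ℂ := ∑ j ∈ Lk, (Pmat j).mulVec (d j) with hw_def
  have hw : ∀ l ∈ Lk, (1 - Pmat l).mulVec (d l) = -w := by
    intro l hl
    have hsplit : w = (Pmat l).mulVec (d l) + ∑ j ∈ Lk.erase l, (Pmat j).mulVec (d j) :=
      (Finset.add_sum_erase Lk _ hl).symm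
    have h := hd l hl
    rw [Matrix.sub_mulVec, Matrix.one_mulVec, hsplit]
    have : ∑ j ∈ Lk.erase l, (Pmat j).mulVec (d j) = -(d l) := by
      linear_combination (norm := abel) h
    rw [this]
    abel
  -- Pmat j * (1 - Pmat j) is PSD
  have hpsd2 : ∀ j, (Pmat j * (1 - Pmat j)).PosSemidef := by
    intro j
    open scoped MatrixOrder in
    set S := CFC.sqrt (Pmat j) with hS_def
    open scoped MatrixOrder in
    have hSH : Sᴴ = S := (CFC.sqrt_nonneg (Pmat j)).posSemidef.isHermitian
    open scoped MatrixOrder in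
    have hSS : S * S = Pmat j := CFC.sqrt_mul_sqrt_self (Pmat j) (hpsd j).nonneg
    have hcomm : S * Pmat j = Pmat j * S := by
      rw [← hSS, mul_assoc]
    have key : Sᴴ * (1 - Pmat j) * S = Pmat j * (1 - Pmat j) := by
      rw [hSH, mul_sub, mul_one, sub_mul, mul_sub, mul_one, hSS,
        hcomm, mul_assoc, hSS]
    have := (hlt j).posSemidef.conjTranspose_mul_mul_same S
    rwa [key] at this
  -- quadratic form of w is nonpositive
  have hterm : ∀ j ∈ Lk, star w ⬝ᵥ (Pmat j).mulVec (d j) ≤ 0 := by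
    intro j hj
    have hwj : w = -((1 - Pmat j).mulVec (d j)) := by
      rw [hw j hj, neg_neg]
    have hH : (1 - Pmat j)ᴴ = 1 - Pmat j := (hlt j).isHermitian
    have : star w ⬝ᵥ (Pmat j).mulVec (d j)
        = -(star (d j) ⬝ᵥ (Pmat j * (1 - Pmat j)).mulVec (d j)) := by
      rw [hwj, star_neg, neg_dotProduct, star_mulVec, hH]
      rw [dotProduct_mulVec, dotProduct_mulVec, vecMul_vecMul]
      congr 2
      rw [sub_mul, one_mul, mul_sub, mul_one]
    rw [this, neg_nonpos]
    exact (hpsd2 j).dotProduct_mulVec_nonneg (d j)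
  have hww : star w ⬝ᵥ w = ∑ j ∈ Lk, star w ⬝ᵥ (Pmat j).mulVec (d j) := by
    conv_lhs => rw [hw_def]
    simp only [dotProduct, Finset.sum_apply, Finset.mul_sum]
    rw [Finset.sum_comm]
  have hle : star w ⬝ᵥ w ≤ 0 := hww ▸ Finset.sum_nonpos hterm
  have hge : 0 ≤ star w ⬝ᵥ w := dotProduct_star_self_nonneg w
  have hw0 : w = 0 := dotProduct_star_self_eq_zero.mp (le_antisymm hle hge)
  intro l hl
  have hdl0 : (1 - Pmat l).mulVec (d l) = 0 := by rw [hw l hl, hw0, neg_zero]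
  by_contra hne
  have hdne : d l ≠ 0 := fun h => hne (sub_eq_zero.mp h)
  have := (hlt l).dotProduct_mulVec_pos hdne
  rw [hdl0, dotProduct_zero] at this
  exact lt_irrefl 0 this
end

section
/- With Π_l as in the LTMMSE system, suppose additionally every Π_l is Hermitian with 0 ≼ Π_l ≺ I and all Π_l are diagonal with equal real diagonal entries π_l ∈ [0,1) in coordinate k. Then the scalar system γ_l + Σ_{j ∈ 𝓛_k \ {l}} π_j γ_j = 1 (l ∈ 𝓛_k) has the explicit unique solution γ_l = ((1 - π_l)(1 + Σ_{j ∈ 𝓛_k} π_j/(1 - π_j)))^{-1} for each l ∈ 𝓛_k. -/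
open Finset

/-- Explicit unique solution of the scalar LSFD-type system
`γ_l + Σ_{j ∈ 𝓛_k \ {l}} π_j γ_j = 1` when all `π_j ∈ [0,1)`:
`γ_l = ((1 - π_l)(1 + Σ_{j ∈ 𝓛_k} π_j/(1 - π_j)))⁻¹`. -/
theorem lsfd_scalar_system_explicit_solution
    {L : ℕ} (π : Fin L → ℝ) (hπ : ∀ l, 0 ≤ π l ∧ π l < 1)
    (Lk : Finset (Fin L)) (hLk : Lk.Nonempty)
    (γ : Fin L → ℝ)
    (hγ : ∀ l, γ l = ((1 - π l) * (1 + ∑ j ∈ Lk, π j / (1 - π j)))⁻¹) :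
    (∀ l ∈ Lk, γ l + ∑ j ∈ Lk.erase l, π j * γ j = 1) ∧
      ∀ γ' : Fin L → ℂ,
        (∀ l ∈ Lk, γ' l + ∑ j ∈ Lk.erase l, (π j : ℂ) * γ' j = 1) →
        ∀ l ∈ Lk, γ' l = (γ l : ℂ) := by
  set S : ℝ := 1 + ∑ j ∈ Lk, π j / (1 - π j) with hS
  have hpos : ∀ l, 0 < 1 - π l := fun l => by linarith [(hπ l).2]
  have hne : ∀ l, (1 - π l) ≠ 0 := fun l => ne_of_gt (hpos l)
  have hSpos : 0 < S := by
    have h0 : (0:ℝ) ≤ ∑ j ∈ Lk, π j / (1 - π j) :=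
      Finset.sum_nonneg fun j _ => div_nonneg (hπ j).1 (le_of_lt (hpos j))
    rw [hS]; linarith
  have hSne : S ≠ 0 := ne_of_gt hSpos
  have hsum : ∑ j ∈ Lk, π j * γ j = (S - 1) * S⁻¹ := by
    have : ∀ j ∈ Lk, π j * γ j = (π j / (1 - π j)) * S⁻¹ := by
      intro j _
      rw [hγ j]
      field_simp
    rw [Finset.sum_congr rfl this, ← Finset.sum_mul]
    congr 1
    simp [hS]
  have hfirst : ∀ l ∈ Lk, γ l + ∑ j ∈ Lk.erase l, π j * γ j = 1 := by
    intro l hl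
    rw [Finset.sum_erase_eq_sub hl, hsum]
    have hγl : γ l * (1 - π l) = S⁻¹ := by
      rw [hγ l, mul_inv]
      field_simp
      exact div_self (hne l)
    have : γ l - π l * γ l = S⁻¹ := by rw [← hγl]; ring
    have hS1 : S⁻¹ + (S - 1) * S⁻¹ = 1 := by field_simp; ring
    nlinarith [this, hS1]
  refine ⟨hfirst, ?_⟩
  intro γ' h
  set T : ℂ := ∑ j ∈ Lk, (π j : ℂ) * γ' j with hTdef
  have hTl : ∀ l ∈ Lk, γ' l = (1 - T) * ((1 : ℂ) - π l)⁻¹ := by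
    intro l hl
    have hh := h l hl
    rw [Finset.sum_erase_eq_sub hl, ← hTdef] at hh
    have hcne : ((1 : ℂ) - π l) ≠ 0 := by
      intro hc
      apply hne l
      have := congrArg Complex.re hc
      simpa using this
    field_simp
    linear_combination hh
  have hTval : T = ((S : ℂ) - 1) * (S : ℂ)⁻¹ := by
    have hT2 : T = (1 - T) * ((S : ℂ) - 1) := by
      calc T = ∑ j ∈ Lk, (π j : ℂ) * ((1 - T) * ((1 : ℂ) - π j)⁻¹) :=
              Finset.sum_congr rfl fun j hj => by rw [hTl j hj]
        _ = (1 - T) * ∑ j ∈ Lk, (π j : ℂ) * ((1 : ℂ) - π j)⁻¹ := by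
              rw [Finset.mul_sum]; exact Finset.sum_congr rfl fun j _ => by ring
        _ = (1 - T) * ((S : ℂ) - 1) := by
              congr 1
              have : ((S : ℂ) - 1) = ∑ j ∈ Lk, ((π j / (1 - π j) : ℝ) : ℂ) := by
                push_cast [hS]; ring
              rw [this]
              exact Finset.sum_congr rfl fun j _ => by
                rw [Complex.ofReal_div]; push_cast; rw [div_eq_mul_inv]
        
    have hScne : (S : ℂ) ≠ 0 := by exact_mod_cast hSne
    rw [eq_mul_inv_iff_mul_eq₀ hScne]
    linear_combination hT2
  intro l hl
  have hcne : ((1 : ℂ) - π l) ≠ 0 := by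
    intro hc
    apply hne l
    have := congrArg Complex.re hc
    simpa using this
  have hScne : (S : ℂ) ≠ 0 := by exact_mod_cast hSne
  rw [hTl l hl, hTval, hγ l]
  push_cast
  field_simp
  ring
end
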